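/- Let p and N be primes with N ≡ 1 (mod p), and χ : (Z/pZ)^× → Z_p^× a character with χ ≠ 1 and χ ≠ ω (the Teichmüller character). For each integer r with 0 < r < N, the coefficient of [r^{-1}] in the twisted Stickelberger element φ_χ = ∑_{a ∈ (Z/NpZ)^×} B̄_1(a/(Np))·χ^{-1}(a)·[a^{-1}] ∈ Q_p[(Z/NZ)^×] equals B_{1,χ^{-1}} + ∑_{a=1}^{r-1} χ^{-1}(a). In particular φ_χ has coefficients in Z_p. -/

import Mathlib

/-- The periodic first Bernoulli function: `B̄₁(x) = x - ⌊x⌋ - 1/2` for `x ∉ ℤ`,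
and `B̄₁(x) = 0` for `x ∈ ℤ`. -/
noncomputable def bernoulliB1 (x : ℚ) : ℚ :=
  if (⌊x⌋ : ℚ) = x then 0 else x - ⌊x⌋ - 1 / 2

open Classical in
/-- `χ⁻¹` extended to the natural numbers: `a ↦ χ(a)⁻¹ ∈ ℤ_p ⊆ ℚ_p` if `a` is prime
to `p`, and `0` otherwise. -/
noncomputable def chiInv {p : ℕ} [Fact p.Prime] (χ : (ZMod p)ˣ →* ℤ_[p]ˣ) (a : ℕ) : ℚ_[p] :=
  if h : IsUnit ((a : ZMod p)) then ((((χ h.unit)⁻¹ : ℤ_[p]ˣ) : ℤ_[p]) : ℚ_[p]) else 0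

open Finset

section Aux

variable {p : ℕ} [hp : Fact p.Prime]

open Classical in
/-- `χ⁻¹` as a function on `ZMod p` with values in `ℤ_p`. -/
noncomputable def gZ (χ : (ZMod p)ˣ →* ℤ_[p]ˣ) (x : ZMod p) : ℤ_[p] :=
  if h : IsUnit x then (((χ h.unit)⁻¹ : ℤ_[p]ˣ) : ℤ_[p]) else 0

lemma chiInv_eq (χ : (ZMod p)ˣ →* ℤ_[p]ˣ) (a : ℕ) :
    chiInv χ a = ((gZ χ (a : ZMod p) : ℤ_[p]) : ℚ_[p]) := by
  rw [chiInv, gZ]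
  split <;> simp

lemma gZ_unit (χ : (ZMod p)ˣ →* ℤ_[p]ˣ) (u : (ZMod p)ˣ) :
    gZ χ (u : ZMod p) = (((χ u)⁻¹ : ℤ_[p]ˣ) : ℤ_[p]) := by
  have h2 : u.isUnit.unit = u := Units.ext u.isUnit.unit_spec
  rw [gZ, dif_pos u.isUnit, h2]

lemma gZ_nonunit (χ : (ZMod p)ˣ →* ℤ_[p]ˣ) {x : ZMod p} (h : ¬ IsUnit x) :
    gZ χ x = 0 := by rw [gZ, dif_neg h]

/-- Sum over `range p` of a function of the residue equals sum over `ZMod p`. -/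
lemma sum_range_zmod {M : Type*} [AddCommMonoid M] (f : ZMod p → M) :
    ∑ a ∈ range p, f (a : ZMod p) = ∑ x : ZMod p, f x := by
  haveI : NeZero p := ⟨hp.out.ne_zero⟩
  refine Finset.sum_nbij' (fun a => (a : ZMod p)) (fun x => x.val) ?_ ?_ ?_ ?_ ?_
  · intro a _; exact mem_univ _
  · intro x _; exact mem_range.2 (ZMod.val_lt x)
  · intro a ha; exact ZMod.val_cast_of_lt (mem_range.1 ha)
  · intro x _; exact ZMod.natCast_rightInverse x
  · intro a _; rfl

/-- A sum over `ZMod p` of a function supported on units. -/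
lemma sum_zmod_units {M : Type*} [AddCommMonoid M] (f : ZMod p → M)
    (hf : ∀ x, ¬ IsUnit x → f x = 0) :
    ∑ x : ZMod p, f x = ∑ u : (ZMod p)ˣ, f (u : ZMod p) := by
  have step : ∑ u : (ZMod p)ˣ, f (u : ZMod p)
      = ∑ x ∈ Finset.univ.map ⟨(Units.val : (ZMod p)ˣ → ZMod p), Units.val_injective⟩, f x := by
    rw [Finset.sum_map]; rfl
  rw [step]
  refine (Finset.sum_subset (Finset.subset_univ _) ?_).symm
  intro x _ hx
  refine hf x fun h => hx ?_
  simp only [Finset.mem_map, Finset.mem_univ, true_and, Function.Embedding.coeFn_mk]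
  exact ⟨h.unit, h.unit_spec⟩

/-- The sum of a nontrivial homomorphism from a finite group into (the units of) a field
vanishes. -/
lemma sum_hom_eq_zero {G : Type*} [Group G] [Fintype G] {K : Type*} [Field K]
    (f : G →* K) (hf : ∃ g, f g ≠ 1) : ∑ g : G, f g = 0 := by
  obtain ⟨g₀, hg₀⟩ := hf
  have h1 : f g₀ * ∑ g : G, f g = ∑ g : G, f g := by
    rw [Finset.mul_sum]
    exact Fintype.sum_bijective (g₀ * ·) (Group.mulLeft_bijective g₀) _ _
      (fun x => (map_mul f g₀ x).symm)
  have h2 : (f g₀ - 1) * ∑ g : G, f g = 0 := by rw [sub_mul, one_mul, h1, sub_self]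
  rcases mul_eq_zero.1 h2 with h | h
  · exact absurd (sub_eq_zero.1 h) hg₀
  · exact h

end Aux

section Aux2

variable {p : ℕ} [hp : Fact p.Prime]

/-- If `χ` reduces to the identity mod `p`, then `χ` equals the Teichmüller character. -/
lemma chi_eq_omega (ω χ : (ZMod p)ˣ →* ℤ_[p]ˣ)
    (hω : ∀ a : (ZMod p)ˣ, PadicInt.toZMod ((ω a : ℤ_[p]ˣ) : ℤ_[p]) = (a : ZMod p))
    (hχ : ∀ a : (ZMod p)ˣ, PadicInt.toZMod ((χ a : ℤ_[p]ˣ) : ℤ_[p]) = (a : ZMod p)) :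
    χ = ω := by
  ext a
  set c : ℤ_[p]ˣ := χ a * (ω a)⁻¹ with hc
  have htoc : PadicInt.toZMod ((c : ℤ_[p]ˣ) : ℤ_[p]) = 1 := by
    have h1 : PadicInt.toZMod (((ω a : ℤ_[p]ˣ) : ℤ_[p]) * (((ω a)⁻¹ : ℤ_[p]ˣ) : ℤ_[p])) = 1 := by
      rw [← Units.val_mul, mul_inv_cancel, Units.val_one, map_one]
    rw [map_mul, hω] at h1
    have : PadicInt.toZMod ((c : ℤ_[p]ˣ) : ℤ_[p])
        = PadicInt.toZMod ((χ a : ℤ_[p])) * PadicInt.toZMod (((ω a)⁻¹ : ℤ_[p]ˣ) : ℤ_[p]) := by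
      rw [hc, Units.val_mul, map_mul]
    rw [this, hχ]
    exact h1
  have hcpow : ((c : ℤ_[p]ˣ) : ℤ_[p]) ^ (p - 1) = 1 := by
    have ha : a ^ (p - 1) = 1 := by
      rw [← ZMod.card_units p]
      exact pow_card_eq_one
    have : c ^ (p - 1) = 1 := by
      rw [hc, mul_pow, ← map_pow, inv_pow, ← map_pow, ha, map_one, map_one, inv_one, mul_one]
    rw [← Units.val_pow_eq_pow_val, this, Units.val_one]
  have hgeom : (∑ i ∈ range (p - 1), ((c : ℤ_[p]ˣ) : ℤ_[p]) ^ i)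
      * (((c : ℤ_[p]ˣ) : ℤ_[p]) - 1) = 0 := by
    rw [geom_sum_mul, hcpow, sub_self]
  have hc1 : ((c : ℤ_[p]ˣ) : ℤ_[p]) = 1 := by
    rcases mul_eq_zero.1 hgeom with h | h
    · exfalso
      have := congrArg PadicInt.toZMod h
      rw [map_sum, map_zero] at this
      simp only [map_pow, htoc, one_pow] at this
      rw [Finset.sum_const, Finset.card_range, nsmul_eq_mul, mul_one] at this
      have hp1 : ((p - 1 : ℕ) : ZMod p) = -1 := by
        have h2 : 1 ≤ p := hp.out.one_lt.le
        push_cast [Nat.cast_sub h2]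
        simp [ZMod.natCast_self]
      rw [hp1] at this
      exact (neg_ne_zero.2 (one_ne_zero : (1 : ZMod p) ≠ 0)) this
    · exact sub_eq_zero.1 h
  have hcu : c = 1 := Units.ext hc1
  rw [hc] at hcu
  have h3 : χ a = ω a := mul_inv_eq_one.1 hcu
  rw [h3]

end Aux2

section Aux3

variable {p : ℕ} [hp : Fact p.Prime]

lemma sum_gZ_eq_zero (χ : (ZMod p)ˣ →* ℤ_[p]ˣ) (hχ1 : χ ≠ 1) :
    ∑ x : ZMod p, ((gZ χ x : ℤ_[p]) : ℚ_[p]) = 0 := by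
  rw [sum_zmod_units (fun x => ((gZ χ x : ℤ_[p]) : ℚ_[p]))
    (fun x hx => by show ((gZ χ x : ℤ_[p]) : ℚ_[p]) = 0; rw [gZ_nonunit χ hx, PadicInt.coe_zero])]
  set f : (ZMod p)ˣ →* ℚ_[p] :=
    ((PadicInt.Coe.ringHom (p := p)).toMonoidHom.comp (Units.coeHom ℤ_[p])).comp χ⁻¹ with hf
  have hval : ∀ u : (ZMod p)ˣ, f u = ((((χ u)⁻¹ : ℤ_[p]ˣ) : ℤ_[p]) : ℚ_[p]) := by
    intro u
    simp only [hf, MonoidHom.comp_apply, MonoidHom.inv_apply, Units.coeHom_apply,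
      RingHom.toMonoidHom_eq_coe, MonoidHom.coe_coe]
    rfl
  have heq : ∀ u : (ZMod p)ˣ, ((gZ χ (u : ZMod p) : ℤ_[p]) : ℚ_[p]) = f u := by
    intro u
    rw [gZ_unit, hval]
  rw [Finset.sum_congr rfl (fun u _ => heq u)]
  refine sum_hom_eq_zero f ?_
  obtain ⟨u, hu⟩ : ∃ u, χ u ≠ 1 := by
    by_contra h
    push_neg at h
    exact hχ1 (MonoidHom.ext fun u => by rw [h u, MonoidHom.one_apply])
  refine ⟨u, fun hfu => hu ?_⟩
  rw [hval] at hfu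
  have h2 : (((χ u)⁻¹ : ℤ_[p]ˣ) : ℤ_[p]) = 1 := Subtype.coe_injective hfu
  have h3 : (χ u)⁻¹ = 1 := Units.ext h2
  exact inv_eq_one.1 h3

lemma sum_theta_eq_zero (ω χ : (ZMod p)ˣ →* ℤ_[p]ˣ)
    (hω : ∀ a : (ZMod p)ˣ, PadicInt.toZMod ((ω a : ℤ_[p]ˣ) : ℤ_[p]) = (a : ZMod p))
    (hχω : χ ≠ ω) :
    ∑ x : ZMod p, x * PadicInt.toZMod (gZ χ x) = 0 := by
  rw [sum_zmod_units (fun x => x * PadicInt.toZMod (gZ χ x))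
    (fun x hx => by show x * PadicInt.toZMod (gZ χ x) = 0
                    rw [gZ_nonunit χ hx, map_zero, mul_zero])]
  set θ : (ZMod p)ˣ →* ZMod p := (Units.coeHom (ZMod p)).comp
    (MonoidHom.id (ZMod p)ˣ * ((Units.map (PadicInt.toZMod (p := p)).toMonoidHom).comp χ)⁻¹)
    with hθ
  have hθval : ∀ u : (ZMod p)ˣ,
      θ u = (u : ZMod p) * PadicInt.toZMod (((χ u)⁻¹ : ℤ_[p]ˣ) : ℤ_[p]) := by
    intro u
    have hw : ((Units.map (PadicInt.toZMod (p := p)).toMonoidHom) (χ u))⁻¹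
        = (Units.map (PadicInt.toZMod (p := p)).toMonoidHom) ((χ u)⁻¹) := (map_inv _ _).symm
    simp only [hθ, MonoidHom.comp_apply, MonoidHom.mul_apply, MonoidHom.id_apply,
      MonoidHom.inv_apply, Units.coeHom_apply, Units.val_mul]
    rw [hw, Units.coe_map]
    rfl
  have heq : ∀ u : (ZMod p)ˣ,
      (u : ZMod p) * PadicInt.toZMod (gZ χ (u : ZMod p)) = θ u := by
    intro u
    rw [gZ_unit, hθval u]
  rw [Finset.sum_congr rfl (fun u _ => heq u)]
  refine sum_hom_eq_zero θ ?_
  by_contra h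
  push_neg at h
  refine hχω (chi_eq_omega ω χ hω (fun u => ?_))
  have h1 := h u
  rw [hθval u] at h1
  set A := PadicInt.toZMod ((χ u : ℤ_[p]ˣ) : ℤ_[p]) with hA
  set B := PadicInt.toZMod (((χ u)⁻¹ : ℤ_[p]ˣ) : ℤ_[p]) with hB
  have hAB : A * B = 1 := by
    rw [hA, hB, ← map_mul, ← Units.val_mul, mul_inv_cancel, Units.val_one, map_one]
  calc A = A * ((u : ZMod p) * B) := by rw [h1, mul_one]
    _ = (u : ZMod p) * (A * B) := by ring
    _ = (u : ZMod p) := by rw [hAB, mul_one]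

end Aux3

section Aux4

variable {p : ℕ} [hp : Fact p.Prime]

lemma sum_g_range (χ : (ZMod p)ˣ →* ℤ_[p]ˣ) (hχ1 : χ ≠ 1) :
    ∑ a ∈ range p, ((gZ χ (a : ZMod p) : ℤ_[p]) : ℚ_[p]) = 0 := by
  rw [sum_range_zmod (fun x => ((gZ χ x : ℤ_[p]) : ℚ_[p]))]
  exact sum_gZ_eq_zero χ hχ1

lemma sum_g_shift (χ : (ZMod p)ˣ →* ℤ_[p]ˣ) (hχ1 : χ ≠ 1) (m : ℕ) :
    ∑ k ∈ range p, ((gZ χ (((m + k : ℕ)) : ZMod p) : ℤ_[p]) : ℚ_[p]) = 0 := by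
  calc ∑ k ∈ range p, ((gZ χ (((m + k : ℕ)) : ZMod p) : ℤ_[p]) : ℚ_[p])
      = ∑ k ∈ range p, ((gZ χ ((m : ZMod p) + ((k : ℕ) : ZMod p)) : ℤ_[p]) : ℚ_[p]) := by
        refine Finset.sum_congr rfl fun k _ => by rw [Nat.cast_add]
    _ = ∑ x : ZMod p, ((gZ χ ((m : ZMod p) + x) : ℤ_[p]) : ℚ_[p]) :=
        sum_range_zmod (fun x => ((gZ χ ((m : ZMod p) + x) : ℤ_[p]) : ℚ_[p]))
    _ = ∑ x : ZMod p, ((gZ χ x : ℤ_[p]) : ℚ_[p]) :=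
        Fintype.sum_equiv (Equiv.addLeft (m : ZMod p)) _ _ (fun x => rfl)
    _ = 0 := sum_gZ_eq_zero χ hχ1

lemma sum_g_add_mul (χ : (ZMod p)ˣ →* ℤ_[p]ˣ) (hχ1 : χ ≠ 1) (m : ℕ) : ∀ t : ℕ,
    ∑ a ∈ range (m + t * p), ((gZ χ (a : ZMod p) : ℤ_[p]) : ℚ_[p])
      = ∑ a ∈ range m, ((gZ χ (a : ZMod p) : ℤ_[p]) : ℚ_[p])
  | 0 => by simp
  | (t + 1) => by
    have h : m + (t + 1) * p = (m + t * p) + p := by ring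
    rw [h, Finset.sum_range_add, sum_g_shift χ hχ1 (m + t * p), add_zero,
      sum_g_add_mul χ hχ1 m t]

lemma sum_g_mod (χ : (ZMod p)ˣ →* ℤ_[p]ˣ) (hχ1 : χ ≠ 1) (n : ℕ) :
    ∑ a ∈ range n, ((gZ χ (a : ZMod p) : ℤ_[p]) : ℚ_[p])
      = ∑ a ∈ range (n % p), ((gZ χ (a : ZMod p) : ℤ_[p]) : ℚ_[p]) := by
  conv_lhs => rw [show n = n % p + (n / p) * p from (Nat.mod_add_div' n p).symm]
  exact sum_g_add_mul χ hχ1 (n % p) (n / p)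

lemma exists_z (ω χ : (ZMod p)ˣ →* ℤ_[p]ˣ)
    (hω : ∀ a : (ZMod p)ˣ, PadicInt.toZMod ((ω a : ℤ_[p]ˣ) : ℤ_[p]) = (a : ZMod p))
    (hχω : χ ≠ ω) :
    ∃ y : ℤ_[p], ∑ a ∈ range p, (a : ℤ_[p]) * gZ χ (a : ZMod p) = (p : ℤ_[p]) * y := by
  set z := ∑ a ∈ range p, (a : ℤ_[p]) * gZ χ (a : ZMod p) with hz
  have h0 : PadicInt.toZMod z = 0 := by
    rw [hz, map_sum]
    have hterm : ∀ a ∈ range p, PadicInt.toZMod ((a : ℤ_[p]) * gZ χ (a : ZMod p))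
        = ((a : ℕ) : ZMod p) * PadicInt.toZMod (gZ χ (a : ZMod p)) := fun a _ => by
      rw [map_mul, map_natCast]
    rw [Finset.sum_congr rfl hterm,
      sum_range_zmod (fun x => x * PadicInt.toZMod (gZ χ x))]
    exact sum_theta_eq_zero ω χ hω hχω
  have hker : z ∈ RingHom.ker (PadicInt.toZMod (p := p)) := h0
  rw [PadicInt.ker_toZMod, PadicInt.maximalIdeal_eq_span_p, Ideal.mem_span_singleton] at hker
  exact hker

lemma bern_eval (num den : ℕ) (h0 : 0 < num) (h1 : num < den) :
    bernoulliB1 ((num : ℚ) / (den : ℚ)) = (num : ℚ) / den - 1 / 2 := by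
  have hden : (0 : ℚ) < den := by exact_mod_cast Nat.pos_of_ne_zero (fun hh => by omega)
  have hx0 : (0 : ℚ) < (num : ℚ) / den := div_pos (by exact_mod_cast h0) hden
  have hx1 : (num : ℚ) / den < 1 := (div_lt_one hden).2 (by exact_mod_cast h1)
  have hfl : ⌊(num : ℚ) / den⌋ = 0 := Int.floor_eq_zero_iff.2 ⟨hx0.le, hx1⟩
  rw [bernoulliB1, hfl]
  rw [if_neg (by push_cast; exact fun h => hx0.ne' h.symm)]
  push_cast
  ring

end Aux4

set_option maxHeartbeats 2000000 in
/-- Let `p, N` be primes with `N ≡ 1 (mod p)` and `χ ≠ 1, ω` a character of `(Z/pZ)ˣ`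
with values in `ℤ_p^×`. For `0 < r < N`, the coefficient of `[r⁻¹]` in the twisted
Stickelberger element `φ_χ = ∑_{a ∈ (Z/NpZ)ˣ} B̄₁(a/(Np))·χ⁻¹(a)·[a⁻¹]`, i.e. the sum
of `B̄₁(a/(Np))·χ⁻¹(a)` over the `a` with `a ≡ r (mod N)`, equals
`B_{1,χ⁻¹} + ∑_{a=1}^{r-1} χ⁻¹(a)`; in particular it lies in `ℤ_p`. -/
theorem stickelberger_coefficient (p N : ℕ) [Fact p.Prime] (hN : N.Prime)
    (hdvd : p ∣ N - 1)
    (ω : (ZMod p)ˣ →* ℤ_[p]ˣ)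
    (hω : ∀ a : (ZMod p)ˣ, PadicInt.toZMod ((ω a : ℤ_[p]ˣ) : ℤ_[p]) = (a : ZMod p))
    (χ : (ZMod p)ˣ →* ℤ_[p]ˣ) (hχ1 : χ ≠ 1) (hχω : χ ≠ ω)
    (r : ℕ) (hr0 : 0 < r) (hrN : r < N) :
    (∑ a ∈ (Finset.range (N * p)).filter
          (fun a => Nat.gcd a (N * p) = 1 ∧ a % N = r % N),
        (bernoulliB1 ((a : ℚ) / ((N : ℚ) * p)) : ℚ_[p]) * chiInv χ a)
      = (∑ a ∈ Finset.range p, (bernoulliB1 ((a : ℚ) / (p : ℚ)) : ℚ_[p]) * chiInv χ a)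
        + ∑ a ∈ Finset.range r, chiInv χ a
    ∧ ‖∑ a ∈ (Finset.range (N * p)).filter
          (fun a => Nat.gcd a (N * p) = 1 ∧ a % N = r % N),
        (bernoulliB1 ((a : ℚ) / ((N : ℚ) * p)) : ℚ_[p]) * chiInv χ a‖ ≤ 1 := by
  classical
  have hpp : p.Prime := Fact.out
  have hppos : 0 < p := hpp.pos
  have hNpos : 0 < N := hN.pos
  have hrmod : r % N = r := Nat.mod_eq_of_lt hrN
  set g : ℕ → ℚ_[p] := fun a => ((gZ χ (a : ZMod p) : ℤ_[p]) : ℚ_[p]) with hg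
  have hchi : ∀ a : ℕ, chiInv χ a = g a := fun a => chiInv_eq χ a
  have hN1 : (N : ZMod p) = 1 := by
    have h1 : ((N - 1 : ℕ) : ZMod p) = 0 := (ZMod.natCast_eq_zero_iff _ p).2 hdvd
    have h2 : N - 1 + 1 = N := Nat.sub_add_cancel hN.one_lt.le
    calc (N : ZMod p) = ((N - 1 + 1 : ℕ) : ZMod p) := by rw [h2]
      _ = 1 := by push_cast [h1]; ring
  have hgcongr : ∀ a b : ℕ, (a : ZMod p) = (b : ZMod p) → g a = g b := by
    intro a b hab
    simp only [hg, hab]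
  have hNQ : (N : ℚ) ≠ 0 := Nat.cast_ne_zero.2 hNpos.ne'
  have hpQ : (p : ℚ) ≠ 0 := Nat.cast_ne_zero.2 hppos.ne'
  -- Step 1: drop the coprimality condition
  have step1 : ∑ a ∈ (Finset.range (N * p)).filter
          (fun a => Nat.gcd a (N * p) = 1 ∧ a % N = r % N),
        (bernoulliB1 ((a : ℚ) / ((N : ℚ) * p)) : ℚ_[p]) * chiInv χ a
      = ∑ a ∈ (Finset.range (N * p)).filter (fun a => a % N = r % N),
        (bernoulliB1 ((a : ℚ) / ((N : ℚ) * p)) : ℚ_[p]) * chiInv χ a := by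
    refine Finset.sum_subset (fun a ha => by
      simp only [Finset.mem_filter] at ha ⊢; exact ⟨ha.1, ha.2.2⟩) ?_
    intro a hmem hnot
    rw [Finset.mem_filter] at hmem
    have hgcd : ¬ (Nat.gcd a (N * p) = 1) := by
      intro hg1
      exact hnot (Finset.mem_filter.2 ⟨hmem.1, hg1, hmem.2⟩)
    have haN : ¬ N ∣ a := by
      intro hdvdN
      have h0 : a % N = 0 := Nat.dvd_iff_mod_eq_zero.mp hdvdN
      omega
    have hcopN : Nat.Coprime a N := Nat.Coprime.symm ((Nat.Prime.coprime_iff_not_dvd hN).2 haN)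
    have hpa : p ∣ a := by
      by_contra hpa
      have hcopp : Nat.Coprime a p :=
        Nat.Coprime.symm ((Nat.Prime.coprime_iff_not_dvd hpp).2 hpa)
      exact hgcd (Nat.Coprime.mul_right hcopN hcopp)
    have hzero : (a : ZMod p) = 0 := (ZMod.natCast_eq_zero_iff a p).2 hpa
    rw [hchi a]
    simp only [hg]
    rw [hzero, gZ_nonunit χ not_isUnit_zero, PadicInt.coe_zero, mul_zero]
  -- Step 2: reindex by k = a / N
  have step2 : ∑ a ∈ (Finset.range (N * p)).filter (fun a => a % N = r % N),
        (bernoulliB1 ((a : ℚ) / ((N : ℚ) * p)) : ℚ_[p]) * chiInv χ a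
      = ∑ k ∈ range p,
        (bernoulliB1 (((r + k * N : ℕ) : ℚ) / ((N : ℚ) * p)) : ℚ_[p]) * chiInv χ (r + k * N) := by
    refine Finset.sum_nbij' (fun a => a / N) (fun k => r + k * N) ?_ ?_ ?_ ?_ ?_
    · intro a ha
      rw [Finset.mem_filter, Finset.mem_range] at ha
      exact Finset.mem_range.2 ((Nat.div_lt_iff_lt_mul hNpos).2 (by rw [mul_comm]; exact ha.1))
    · intro k hk
      rw [Finset.mem_range] at hk
      refine Finset.mem_filter.2 ⟨Finset.mem_range.2 ?_, ?_⟩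
      · calc r + k * N < N + k * N := by omega
          _ = (k + 1) * N := by ring
          _ ≤ p * N := Nat.mul_le_mul_right _ (by omega)
          _ = N * p := mul_comm _ _
      · show (r + k * N) % N = r % N
        rw [Nat.add_mul_mod_self_right]
    · intro a ha
      rw [Finset.mem_filter] at ha
      show r + a / N * N = a
      calc r + a / N * N = a % N + a / N * N := by rw [← hrmod, ← ha.2]
        _ = a := Nat.mod_add_div' a N
    · intro k hk
      rw [Finset.mem_range] at hk
      show (r + k * N) / N = k
      rw [Nat.add_mul_div_right _ _ hNpos, Nat.div_eq_of_lt hrN, zero_add]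
    · intro a ha
      rw [Finset.mem_filter] at ha
      have hae : r + a / N * N = a := by
        calc r + a / N * N = a % N + a / N * N := by rw [← hrmod, ← ha.2]
          _ = a := Nat.mod_add_div' a N
      show (bernoulliB1 ((a : ℚ) / ((N : ℚ) * p)) : ℚ_[p]) * chiInv χ a
        = (bernoulliB1 (((r + a / N * N : ℕ) : ℚ) / ((N : ℚ) * p)) : ℚ_[p])
            * chiInv χ (r + a / N * N)
      rw [hae]
  -- Step 3: rewrite each term
  have step3 : ∀ k ∈ range p,
      (bernoulliB1 (((r + k * N : ℕ) : ℚ) / ((N : ℚ) * p)) : ℚ_[p]) * chiInv χ (r + k * N)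
        = ((((r : ℚ) / ((N : ℚ) * p)) : ℚ) : ℚ_[p]) * g (r + k)
          + ((((k : ℚ) / (p : ℚ) - 1 / 2) : ℚ) : ℚ_[p]) * g (r + k) := by
    intro k hk
    rw [Finset.mem_range] at hk
    have hlt : r + k * N < N * p := by
      calc r + k * N < N + k * N := by omega
        _ = (k + 1) * N := by ring
        _ ≤ p * N := Nat.mul_le_mul_right _ (by omega)
        _ = N * p := mul_comm _ _
    have hb : bernoulliB1 (((r + k * N : ℕ) : ℚ) / ((N : ℚ) * p))
        = (r : ℚ) / ((N : ℚ) * p) + ((k : ℚ) / p - 1 / 2) := by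
      have h1 := bern_eval (r + k * N) (N * p) (by omega) hlt
      rw [show (((N * p : ℕ)) : ℚ) = (N : ℚ) * p by push_cast; ring] at h1
      rw [h1]
      push_cast
      field_simp
      ring
    have hc : chiInv χ (r + k * N) = g (r + k) := by
      rw [hchi]
      refine hgcongr _ _ ?_
      push_cast [hN1]
      ring
    rw [hb, hc]
    push_cast
    ring
  -- Step 4: the first piece vanishes
  have step4 : ∑ k ∈ range p, ((((r : ℚ) / ((N : ℚ) * p)) : ℚ) : ℚ_[p]) * g (r + k) = 0 := by
    rw [← Finset.mul_sum]
    have h0 : ∑ k ∈ range p, ((gZ χ ((r + k : ℕ) : ZMod p) : ℤ_[p]) : ℚ_[p]) = 0 :=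
      sum_g_shift χ hχ1 r
    simp only [hg]
    rw [h0, mul_zero]
  -- Step 5: reindex the second piece
  set s' := r % p with hs'
  have hs'lt : s' < p := Nat.mod_lt _ hppos
  have hs'le : s' ≤ p := hs'lt.le
  have step5 : ∑ k ∈ range p, ((((k : ℚ) / (p : ℚ) - 1 / 2) : ℚ) : ℚ_[p]) * g (r + k)
      = ∑ b ∈ range p, (((((b + (p - s')) % p : ℕ) : ℚ) / (p : ℚ) - 1 / 2 : ℚ) : ℚ_[p])
          * g (r + (b + (p - s')) % p) := by
    refine Finset.sum_nbij' (fun k => (k + s') % p) (fun b => (b + (p - s')) % p) ?_ ?_ ?_ ?_ ?_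
    · intro k _; exact Finset.mem_range.2 (Nat.mod_lt _ hppos)
    · intro b _; exact Finset.mem_range.2 (Nat.mod_lt _ hppos)
    · intro k hk
      rw [Finset.mem_range] at hk
      show ((k + s') % p + (p - s')) % p = k
      rw [Nat.mod_add_mod, add_assoc, Nat.add_sub_cancel' hs'le, Nat.add_mod_right]
      exact Nat.mod_eq_of_lt hk
    · intro b hb
      rw [Finset.mem_range] at hb
      show ((b + (p - s')) % p + s') % p = b
      rw [Nat.mod_add_mod, add_assoc, Nat.sub_add_cancel hs'le, Nat.add_mod_right]
      exact Nat.mod_eq_of_lt hb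
    · intro k hk
      rw [Finset.mem_range] at hk
      have hinv : ((k + s') % p + (p - s')) % p = k := by
        rw [Nat.mod_add_mod, add_assoc, Nat.add_sub_cancel' hs'le, Nat.add_mod_right]
        exact Nat.mod_eq_of_lt hk
      show ((((k : ℚ) / (p : ℚ) - 1 / 2) : ℚ) : ℚ_[p]) * g (r + k)
        = ((((((k + s') % p + (p - s')) % p : ℕ) : ℚ) / (p : ℚ) - 1 / 2 : ℚ) : ℚ_[p])
            * g (r + ((k + s') % p + (p - s')) % p)
      rw [hinv]
  -- Step 6: evaluate each term of the reindexed sum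
  have step6 : ∀ b ∈ range p,
      (((((b + (p - s')) % p : ℕ) : ℚ) / (p : ℚ) - 1 / 2 : ℚ) : ℚ_[p])
          * g (r + (b + (p - s')) % p)
        = ((((b : ℚ) / p - 1 / 2 : ℚ)) : ℚ_[p]) * g b
            - (((s' : ℚ) / p : ℚ) : ℚ_[p]) * g b
            + (if b < s' then g b else 0) := by
    intro b hb
    rw [Finset.mem_range] at hb
    have hgb : g (r + (b + (p - s')) % p) = g b := by
      refine hgcongr _ _ ?_
      have h2 : ((s' : ℕ) : ZMod p) = (r : ZMod p) := by rw [hs']; exact ZMod.natCast_mod r p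
      push_cast [ZMod.natCast_mod, Nat.cast_sub hs'le, ZMod.natCast_self]
      rw [h2]
      ring
    rw [hgb]
    by_cases hcase : b < s'
    · have hmod : (b + (p - s')) % p = b + (p - s') := Nat.mod_eq_of_lt (by omega)
      rw [hmod, if_pos hcase]
      have hq : ((b + (p - s') : ℕ) : ℚ) / p - 1 / 2
          = ((b : ℚ) / p - 1 / 2) - (s' : ℚ) / p + 1 := by
        push_cast [Nat.cast_sub hs'le]
        field_simp
        ring
      rw [hq]
      push_cast
      ring
    · push_neg at hcase
      have h1 : b + (p - s') = (b - s') + p := by omega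
      have hmod : (b + (p - s')) % p = b - s' := by
        rw [h1, Nat.add_mod_right]
        exact Nat.mod_eq_of_lt (by omega)
      rw [hmod, if_neg (not_lt.2 hcase)]
      have hq : ((b - s' : ℕ) : ℚ) / p - 1 / 2 = ((b : ℚ) / p - 1 / 2) - (s' : ℚ) / p := by
        push_cast [Nat.cast_sub hcase]
        ring
      rw [hq]
      push_cast
      ring
  -- Step 7: sum the evaluated terms
  have step7 : ∑ b ∈ range p,
      (((((b : ℚ) / p - 1 / 2 : ℚ)) : ℚ_[p]) * g b
        - (((s' : ℚ) / p : ℚ) : ℚ_[p]) * g b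
        + (if b < s' then g b else 0))
      = (∑ b ∈ range p, ((((b : ℚ) / p - 1 / 2 : ℚ)) : ℚ_[p]) * g b)
          + ∑ b ∈ range s', g b := by
    rw [Finset.sum_add_distrib, Finset.sum_sub_distrib]
    have h1 : ∑ b ∈ range p, (((s' : ℚ) / p : ℚ) : ℚ_[p]) * g b = 0 := by
      rw [← Finset.mul_sum]
      simp only [hg]
      rw [sum_g_range χ hχ1, mul_zero]
    have h2 : ∑ b ∈ range p, (if b < s' then g b else 0) = ∑ b ∈ range s', g b := by
      calc ∑ b ∈ range p, (if b < s' then g b else 0)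
          = ∑ b ∈ range s', (if b < s' then g b else 0) :=
            (Finset.sum_subset (Finset.range_subset_range.2 hs'le)
              (fun x _ hxs => if_neg (fun hlt => hxs (Finset.mem_range.2 hlt)))).symm
        _ = ∑ b ∈ range s', g b :=
            Finset.sum_congr rfl (fun b hb => if_pos (Finset.mem_range.1 hb))
    rw [h1, h2, sub_zero]
  -- Step 8: extend the partial sum using periodicity
  have step8 : ∑ b ∈ range s', g b = ∑ b ∈ range r, g b := by
    simp only [hg]
    rw [hs']
    exact (sum_g_mod χ hχ1 r).symm
  -- Step 9: identify the Bernoulli sum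
  have step9 : ∑ b ∈ range p, ((((b : ℚ) / p - 1 / 2 : ℚ)) : ℚ_[p]) * g b
      = ∑ a ∈ range p, (bernoulliB1 ((a : ℚ) / (p : ℚ)) : ℚ_[p]) * chiInv χ a := by
    refine Finset.sum_congr rfl (fun a ha => ?_)
    rw [Finset.mem_range] at ha
    rcases Nat.eq_zero_or_pos a with h0 | h0
    · subst h0
      have hg0 : g 0 = 0 := by
        simp only [hg]
        rw [Nat.cast_zero, gZ_nonunit χ not_isUnit_zero, PadicInt.coe_zero]
      rw [hchi, hg0, mul_zero, mul_zero]
    · rw [bern_eval a p h0 ha, hchi]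
  -- Assemble part 1
  have part1 : ∑ a ∈ (Finset.range (N * p)).filter
          (fun a => Nat.gcd a (N * p) = 1 ∧ a % N = r % N),
        (bernoulliB1 ((a : ℚ) / ((N : ℚ) * p)) : ℚ_[p]) * chiInv χ a
      = (∑ a ∈ Finset.range p, (bernoulliB1 ((a : ℚ) / (p : ℚ)) : ℚ_[p]) * chiInv χ a)
        + ∑ a ∈ Finset.range r, chiInv χ a := by
    rw [step1, step2, Finset.sum_congr rfl step3, Finset.sum_add_distrib, step4, zero_add,
      step5, Finset.sum_congr rfl step6, step7, step8, step9]
    congr 1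
    exact Finset.sum_congr rfl (fun a _ => (hchi a).symm)
  refine ⟨part1, ?_⟩
  -- Part 2: the norm bound
  obtain ⟨y, hy⟩ := exists_z ω χ hω hχω
  have hp0 : (p : ℚ_[p]) ≠ 0 := Nat.cast_ne_zero.2 hppos.ne'
  have hB : (∑ a ∈ Finset.range p, (bernoulliB1 ((a : ℚ) / (p : ℚ)) : ℚ_[p]) * chiInv χ a)
      = ((y : ℤ_[p]) : ℚ_[p]) := by
    rw [← step9]
    have hterm : ∀ b ∈ range p, ((((b : ℚ) / p - 1 / 2 : ℚ)) : ℚ_[p]) * g b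
        = ((p : ℚ_[p]))⁻¹ * ((b : ℚ_[p]) * g b) - (((1 : ℚ) / 2 : ℚ) : ℚ_[p]) * g b := by
      intro b _
      push_cast
      field_simp
    rw [Finset.sum_congr rfl hterm, Finset.sum_sub_distrib, ← Finset.mul_sum, ← Finset.mul_sum]
    have hzero2 : ∑ b ∈ range p, g b = 0 := by
      simp only [hg]; exact sum_g_range χ hχ1
    rw [hzero2, mul_zero, sub_zero]
    have hcast : ∑ b ∈ range p, ((b : ℚ_[p]) * g b)
        = (((∑ a ∈ range p, (a : ℤ_[p]) * gZ χ (a : ZMod p)) : ℤ_[p]) : ℚ_[p]) := by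
      rw [show (((∑ a ∈ range p, (a : ℤ_[p]) * gZ χ (a : ZMod p)) : ℤ_[p]) : ℚ_[p])
          = ∑ a ∈ range p, (((a : ℤ_[p]) * gZ χ (a : ZMod p) : ℤ_[p]) : ℚ_[p]) from
        map_sum (PadicInt.Coe.ringHom (p := p)) _ _]
      refine Finset.sum_congr rfl (fun b _ => ?_)
      rw [PadicInt.coe_mul, PadicInt.coe_natCast]
    rw [hcast, hy, PadicInt.coe_mul, PadicInt.coe_natCast, inv_mul_cancel_left₀ hp0]
  have hT : ∑ a ∈ Finset.range r, chiInv χ a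
      = (((∑ a ∈ range r, gZ χ (a : ZMod p)) : ℤ_[p]) : ℚ_[p]) := by
    rw [show (((∑ a ∈ range r, gZ χ (a : ZMod p)) : ℤ_[p]) : ℚ_[p])
        = ∑ a ∈ range r, ((gZ χ (a : ZMod p) : ℤ_[p]) : ℚ_[p]) from
      map_sum (PadicInt.Coe.ringHom (p := p)) _ _]
    exact Finset.sum_congr rfl (fun a _ => hchi a)
  rw [part1, hB, hT]
  rw [show ((y : ℤ_[p]) : ℚ_[p]) + (((∑ a ∈ range r, gZ χ (a : ZMod p)) : ℤ_[p]) : ℚ_[p])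
      = (((y + ∑ a ∈ range r, gZ χ (a : ZMod p)) : ℤ_[p]) : ℚ_[p]) from
    (PadicInt.coe_add _ _).symm]
  rw [← PadicInt.norm_def]
  exact PadicInt.norm_le_one _
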